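/- Let w = u·a·v·b·Sym(u)·b be an element of F_n, where u·a is the principal prefix of w. Then the word u·a can be decomposed into two factors u₁ and u₂ (u·a = u₁·u₂) such that either u₂·ū₁ or ū₂·u₁ is a palindrome. -/

import Mathlib

/-- The two-letter alphabet {a, b}. -/
inductive Letter : Type
  | a : Letter
  | b : Letter
deriving DecidableEq, BEq, Repr

/-- Words over the alphabet {a, b}. -/
abbrev Word := List Letter

/-- δ(w) = |w|_a − |w|_b. -/
def delta (w : Word) : ℤ := (w.count Letter.a : ℤ) - (w.count Letter.b : ℤ)

/-- A Dyck word: δ(w) = 0 and δ(p) ≥ 0 for every prefix p of w. -/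
def IsDyck (w : Word) : Prop := delta w = 0 ∧ ∀ p : Word, p <+: w → 0 ≤ delta p

/-- Membership in D_n: w = d·b with d a Dyck word of length 2n. -/
def InD (n : ℕ) (w : Word) : Prop :=
  ∃ d : Word, IsDyck d ∧ d.length = 2 * n ∧ w = d ++ [Letter.b]

/-- Exchanging the letters a and b. -/
def Letter.flip : Letter → Letter
  | .a => .b
  | .b => .a

/-- The complement w̄ of a word w. -/
def comp (w : Word) : Word := w.map Letter.flip

/-- Sym(w): the complement of the mirror (reversal) of w. -/
def sym (w : Word) : Word := comp w.reverse

/-- A palindrome: a word equal to its mirror. -/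
def Palindrome (w : Word) : Prop := w.reverse = w

/-- w' is a conjugate of w: w = u·v and w' = v·u. -/
def Conj (w w' : Word) : Prop := ∃ u v : Word, w = u ++ v ∧ w' = v ++ u

/-- u is the principal prefix of w: the shortest prefix of w with δ(u) maximal. -/
def IsPrincipalPrefix (u w : Word) : Prop :=
  u <+: w ∧ (∀ p : Word, p <+: w → delta p ≤ delta u) ∧
    (∀ p : Word, p <+: w → delta p = delta u → u.length ≤ p.length)

/-- The graph of the map γ: writing w = u·v·b with u the principal prefix of w,
    γ(w) = v̄·b·ū. -/
def GammaRel (w w' : Word) : Prop :=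
  ∃ u v : Word, IsPrincipalPrefix u w ∧ w = u ++ v ++ [Letter.b] ∧
    w' = comp v ++ [Letter.b] ++ comp u

/-- F_n: the fixed points of γ in D_n. -/
def InF (n : ℕ) (w : Word) : Prop := InD n w ∧ GammaRel w w

/-- F_γ = ⋃_{n ≥ 1} F_n. -/
def InFgamma (w : Word) : Prop := ∃ n : ℕ, 1 ≤ n ∧ InF n w

/-- x^y: concatenation of the word x with itself y times. -/
def wpow (x : Word) : ℕ → Word
  | 0 => []
  | k + 1 => x ++ wpow x k

@[simp] lemma letter_flip_flip (c : Letter) : c.flip.flip = c := by cases c <;> rfl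

@[simp] lemma comp_comp (w : Word) : comp (comp w) = w := by
  simp [comp, List.map_map, Function.comp_def]

@[simp] lemma comp_append (w₁ w₂ : Word) : comp (w₁ ++ w₂) = comp w₁ ++ comp w₂ := by
  simp [comp]

@[simp] lemma comp_reverse (w : Word) : comp w.reverse = (comp w).reverse := by
  simp [comp]

@[simp] lemma comp_length (w : Word) : (comp w).length = w.length := by simp [comp]

lemma comp_inj {w w' : Word} (h : comp w = comp w') : w = w' := by
  have := congrArg comp h; simpa using this

@[simp] lemma beq_ab : (Letter.a == Letter.b) = false := by decide
@[simp] lemma beq_ba : (Letter.b == Letter.a) = false := by decide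
@[simp] lemma beq_aa : (Letter.a == Letter.a) = true := by decide
@[simp] lemma beq_bb : (Letter.b == Letter.b) = true := by decide

lemma count_comp_a (w : Word) : (comp w).count Letter.a = w.count Letter.b := by
  induction w with
  | nil => rfl
  | cons h t ih =>
      cases h <;> simp [comp, Letter.flip, List.count_cons] at ih ⊢ <;> omega

lemma length_eq_counts (w : Word) : w.length = w.count Letter.a + w.count Letter.b := by
  induction w with
  | nil => rfl
  | cons h t ih => cases h <;> simp [List.count_cons] <;> omega

lemma sym_fixed_split {r : Word} (h : sym r = r) : ∃ t : Word, r = t ++ sym t := by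
  have hc : r.count Letter.a = r.count Letter.b := by
    conv_lhs => rw [← h]
    rw [sym, count_comp_a, List.count_reverse]
  have hlen : r.length = 2 * r.count Letter.a := by
    rw [length_eq_counts]; omega
  set k := r.count Letter.a with hk
  refine ⟨r.take k, ?_⟩
  conv_lhs => rw [← List.take_append_drop k r]
  congr 1
  have h1 : (List.take k r).reverse = List.drop k r.reverse := by
    rw [List.reverse_take]; congr 1; omega
  rw [sym, h1, comp, List.map_drop]
  change List.drop k r = List.drop k (comp r.reverse)
  rw [show comp r.reverse = sym r from rfl, h]

lemma key : ∀ N : ℕ, ∀ v x : Word, v.length ≤ N →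
    (x ++ v = comp v ++ x.reverse ∨ x ++ v = comp v ++ sym x) →
    ∃ u₁ u₂ : Word, x = u₁ ++ u₂ ∧
      (Palindrome (u₂ ++ comp u₁) ∨ Palindrome (comp u₂ ++ u₁)) := by
  intro N
  induction N with
  | zero =>
      intro v x hv heq
      have hv0 : v = [] := List.length_eq_zero_iff.mp (Nat.le_zero.mp hv)
      subst hv0
      rcases heq with heq | heq
      · simp only [List.append_nil, comp, List.map_nil, List.nil_append] at heq
        refine ⟨[], x, by simp, Or.inl ?_⟩
        show (x ++ comp []).reverse = _
        simp only [comp, List.map_nil, List.append_nil]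
        exact heq.symm
      · simp only [List.append_nil, comp, List.map_nil, List.nil_append] at heq
        obtain ⟨t, ht⟩ := sym_fixed_split heq.symm
        refine ⟨t, sym t, ht, Or.inr ?_⟩
        show (comp (sym t) ++ t).reverse = _
        rw [sym, comp_comp]
        simp [List.reverse_append]
  | succ N IH =>
      intro v x hv heq
      rcases eq_or_ne x [] with hx | hx
      · exact ⟨[], [], by simp [hx], Or.inl (by simp [Palindrome, comp])⟩
      have hx1 : 1 ≤ x.length := List.length_pos_iff.mpr hx
      by_cases hlt : v.length < x.length
      · -- small case : comp v is a prefix of x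
        have hpre : x.take v.length = comp v := by
          rcases heq with h | h <;>
          · have h2 := congrArg (List.take v.length) h
            rwa [List.take_append_of_le_length (le_of_lt hlt),
              List.take_left' (comp_length v)] at h2
        have hx_eq : x = comp v ++ x.drop v.length := by
          rw [← hpre, List.take_append_drop]
        set r := x.drop v.length with hrdef
        rcases heq with heq | heq
        · -- E1
          rw [hx_eq] at heq
          simp only [List.reverse_append, List.append_assoc] at heq
          have h2 := List.append_cancel_left heq
          obtain ⟨hr_pal, hv_sym⟩ := List.append_inj' h2 (by simp)
          have hsv : sym v = v := by rw [sym, comp_reverse]; exact hv_sym.symm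
          obtain ⟨t, ht⟩ := sym_fixed_split hsv
          refine ⟨comp t, t.reverse ++ r, ?_, Or.inl ?_⟩
          · rw [hx_eq, ht, comp_append,
              show comp (sym t) = t.reverse by rw [sym, comp_comp], List.append_assoc]
          · show ((t.reverse ++ r) ++ comp (comp t)).reverse = _
            rw [comp_comp]
            simp only [List.reverse_append, List.reverse_reverse, ← hr_pal]
            simp [List.append_assoc]
        · -- E2
          rw [hx_eq] at heq
          simp only [sym, List.reverse_append, comp_append, comp_reverse, comp_comp,
            List.append_assoc] at heq
          have h2 := List.append_cancel_left heq
          obtain ⟨hr_sym, hv_pal⟩ := List.append_inj' h2 (by simp)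
          have hsr : sym r = r := by rw [sym, comp_reverse]; exact hr_sym.symm
          obtain ⟨t, ht⟩ := sym_fixed_split hsr
          refine ⟨comp v ++ t, sym t, ?_, Or.inr ?_⟩
          · rw [hx_eq, ht, List.append_assoc]
          · have hcvp : (comp v).reverse = comp v := by
              rw [← comp_reverse, ← hv_pal]
            show (comp (sym t) ++ (comp v ++ t)).reverse = _
            rw [sym, comp_comp]
            simp only [List.reverse_append, List.reverse_reverse, hcvp]
            simp [List.append_assoc]
      · -- big case : x is a prefix of comp v
        push_neg at hlt
        have hxc : (comp v).take x.length = x := by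
          rcases heq with h | h <;>
          · have h2 := congrArg (List.take x.length) h
            rw [List.take_left' rfl,
              List.take_append_of_le_length (by simpa using hlt)] at h2
            exact h2.symm
        set t := (comp v).drop x.length with htdef
        have hcv : comp v = x ++ t := by
          have h := List.take_append_drop x.length (comp v)
          rw [hxc] at h
          exact h.symm
        have hvt : v = comp x ++ comp t := by
          have := congrArg comp hcv; simpa using this
        have hlt' : t.length ≤ N := by
          have h1 : t.length = v.length - x.length := by
            rw [htdef, List.length_drop, comp_length]
          omega
        rcases heq with heq | heq
        · rw [hcv, hvt] at heq
          simp only [List.append_assoc] at heq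
          have h2 := List.append_cancel_left heq
          have h3 := congrArg comp h2
          simp only [comp_append, comp_comp, comp_reverse] at h3
          exact IH t x hlt' (Or.inr (by rw [sym, comp_reverse]; exact h3))
        · rw [sym, comp_reverse, hcv, hvt] at heq
          simp only [List.append_assoc] at heq
          have h2 := List.append_cancel_left heq
          have h3 := congrArg comp h2
          simp only [comp_append, comp_comp, comp_reverse] at h3
          exact IH t x hlt' (Or.inl h3)

/-- Corollary: for w = u·a·v·b·Sym(u)·b ∈ F_n with u·a its principal prefix,
    u·a decomposes as u₁·u₂ with u₂·ū₁ or ū₂·u₁ a palindrome. -/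
theorem coro_decomposition (n : ℕ) (w u v : Word) (hw : InF n w)
    (hdec : w = u ++ [Letter.a] ++ v ++ [Letter.b] ++ sym u ++ [Letter.b])
    (hpp : IsPrincipalPrefix (u ++ [Letter.a]) w) :
    ∃ u₁ u₂ : Word, u ++ [Letter.a] = u₁ ++ u₂ ∧
      (Palindrome (u₂ ++ comp u₁) ∨ Palindrome (comp u₂ ++ u₁)) := by
  obtain ⟨-, u', v', hppu', hw1, hw2⟩ := hw
  set x : Word := u ++ [Letter.a] with hxdef
  -- the principal prefix is unique, so u' = x
  have hd1 : delta u' ≤ delta x := hpp.2.1 u' hppu'.1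
  have hd2 : delta x ≤ delta u' := hppu'.2.1 x hpp.1
  have hδ : delta u' = delta x := le_antisymm hd1 hd2
  have hl1 : u'.length ≤ x.length := hppu'.2.2 x hpp.1 hδ.symm
  have hl2 : x.length ≤ u'.length := hpp.2.2 u' hppu'.1 hδ
  have hux : u' = x :=
    (List.prefix_of_prefix_length_le hppu'.1 hpp.1 hl1).eq_of_length
      (le_antisymm hl1 hl2)
  subst hux
  -- identify v'
  have hv' : v' = v ++ [Letter.b] ++ sym u := by
    have h := hw1.symm.trans hdec
    rw [hxdef] at h
    simp only [List.append_assoc] at h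
    have h2 := List.append_cancel_left (List.append_cancel_left h)
    have h3 : v' ++ [Letter.b] = (v ++ ([Letter.b] ++ sym u)) ++ [Letter.b] := by
      simpa [List.append_assoc] using h2
    have := List.append_cancel_right h3
    simpa [List.append_assoc] using this
  -- the central word equation
  have hbig := hdec.symm.trans hw2
  rw [hv', hxdef] at hbig
  simp only [comp_append, List.append_assoc,
    show comp [Letter.b] = [Letter.a] from rfl,
    show comp [Letter.a] = [Letter.b] from rfl,
    show comp (sym u) = u.reverse by rw [sym, comp_comp]] at hbig
  have hmain : x ++ v = comp v ++ x.reverse := by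
    have hform : (x ++ v) ++ ([Letter.b] ++ (sym u ++ [Letter.b]))
        = (comp v ++ x.reverse) ++ ([Letter.b] ++ (comp u ++ [Letter.b])) := by
      rw [hxdef]
      simp only [List.reverse_append, List.reverse_singleton, List.append_assoc]
      simpa [List.append_assoc] using hbig
    have hlen : (x ++ v).length = (comp v ++ x.reverse).length := by
      simp [List.length_append]; omega
    exact (List.append_inj hform hlen).1
  rw [hxdef] at hmain
  exact key v.length v (u ++ [Letter.a]) le_rfl (Or.inl hmain)
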